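/- Let W be the Weyl group of a reduced irreducible root system of rank at least 2, and let w be a Coxeter element of W. Then no simple reflection commutes with w; i.e., the set of commuting descents of w is empty. Equivalently, w(α_j) ≠ ±α_j for every simple root α_j. -/

import Mathlib

namespace Stmt8Aux

variable {B : Type*} [Fintype B] [DecidableEq B]

/-- Reflection-like endomorphism of `B → ℝ` attached to row `i` of the matrix `C`. -/
noncomputable def sig (C : B → B → ℝ) (i : B) : Module.End ℝ (B → ℝ) where
  toFun v := fun k => v k - (if k = i then ∑ x, C i x * v x else 0)
  map_add' u v := by
    funext k
    by_cases h : k = i <;> simp [h, mul_add, Finset.sum_add_distrib] <;> ring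
  map_smul' c v := by
    funext k
    by_cases h : k = i <;>
      simp [h, smul_eq_mul, Finset.mul_sum, mul_sub, mul_assoc, mul_left_comm]

theorem sig_apply (C : B → B → ℝ) (i : B) (v : B → ℝ) (k : B) :
    sig C i v k = v k - (if k = i then ∑ x, C i x * v x else 0) := rfl

theorem sig_apply_ne (C : B → B → ℝ) {i k : B} (h : k ≠ i) (v : B → ℝ) :
    sig C i v k = v k := by simp [sig_apply, h]

theorem prods_apply_ne (C : B → B → ℝ) (l : List B) {k : B} (hk : k ∉ l) (v : B → ℝ) :
    (l.map (sig C)).prod v k = v k := by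
  induction l with
  | nil => simp
  | cons j t ih =>
    simp only [List.map_cons, List.prod_cons, Module.End.mul_apply]
    have hkj : k ≠ j := fun h => hk (h ▸ List.mem_cons_self (a := j) (l := t))
    rw [sig_apply_ne C hkj]
    exact ih (fun h => hk (List.mem_cons_of_mem j h))

theorem lemB (C : B → B → ℝ) (hnd : ∀ x y, x ≠ y → C x y ≤ 0)
    (i : B) (l : List B) (hl : l.Nodup) (hi : i ∉ l) :
    (l.map (sig C)).prod (Pi.single i 1) i = 1 ∧
    (∀ k, k ≠ i → 0 ≤ (l.map (sig C)).prod (Pi.single i 1) k) ∧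
    (∀ k, k ≠ i → k ∉ l → (l.map (sig C)).prod (Pi.single i 1) k = 0) ∧
    (∀ j ∈ l, (l.map (sig C)).prod (Pi.single i 1) j = 0 → C j i = 0) := by
  induction l with
  | nil =>
    refine ⟨by simp, ?_, ?_, by simp⟩ <;> intro k hk <;> simp [Pi.single_apply, hk]
  | cons j t ih =>
    have hjt : j ∉ t := (List.nodup_cons.mp hl).1
    have hji : j ≠ i := fun h => hi (h ▸ List.mem_cons_self (a := j) (l := t))
    have hit : i ∉ t := fun h => hi (List.mem_cons_of_mem j h)
    obtain ⟨h1, h2, h3, h4⟩ := ih (List.nodup_cons.mp hl).2 hit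
    set u := (t.map (sig C)).prod (Pi.single i 1) with hu
    have huj : u j = 0 := h3 j hji hjt
    have hsum : (∑ x, C j x * u x) ≤ C j i := by
      have he : (∑ x, C j x * u x) = C j i * u i + ∑ x ∈ Finset.univ.erase i, C j x * u x :=
        (Finset.add_sum_erase _ (fun x => C j x * u x) (Finset.mem_univ i)).symm
      rw [he, h1, mul_one]
      have : (∑ x ∈ Finset.univ.erase i, C j x * u x) ≤ 0 := by
        apply Finset.sum_nonpos
        intro x hx
        have hxi : x ≠ i := (Finset.mem_erase.mp hx).1
        by_cases hxj : x = j
        · subst hxj; rw [huj, mul_zero]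
        · exact mul_nonpos_of_nonpos_of_nonneg (hnd j x (Ne.symm hxj)) (h2 x hxi)
      linarith
    have hCji : C j i ≤ 0 := hnd j i hji
    simp only [List.map_cons, List.prod_cons, Module.End.mul_apply, ← hu]
    refine ⟨?_, ?_, ?_, ?_⟩
    · rw [sig_apply_ne C (Ne.symm hji), h1]
    · intro k hk
      by_cases hkj : k = j
      · subst hkj
        rw [sig_apply, if_pos rfl, huj]
        linarith
      · rw [sig_apply_ne C hkj]; exact h2 k hk
    · intro k hk hkl
      have hkj : k ≠ j := fun h => hkl (h ▸ List.mem_cons_self (a := j) (l := t))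
      rw [sig_apply_ne C hkj]
      exact h3 k hk (fun h => hkl (List.mem_cons_of_mem j h))
    · intro j' hj' hval
      rcases List.mem_cons.mp hj' with rfl | hj't
      · rw [sig_apply, if_pos rfl, huj] at hval
        linarith
      · have hj'j : j' ≠ j := fun h => hjt (h ▸ hj't)
        rw [sig_apply_ne C hj'j] at hval
        exact h4 j' hj't hval

theorem two_step (C : B → B → ℝ) {i j : B} (hij : i ≠ j)
    (h2i : C i i = 2) (h2j : C j j = 2) (v : B → ℝ) (a b : ℝ) :
    (sig C i * sig C j) (fun k => v k + (if k = i then a else 0) + (if k = j then b else 0)) =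
      fun k => v k +
        (if k = i then
          (-a - (∑ x, C i x * v x) - C i j * (-b - (∑ x, C j x * v x) - C j i * a)) else 0) +
        (if k = j then (-b - (∑ x, C j x * v x) - C j i * a) else 0) := by
  funext k
  simp only [Module.End.mul_apply, sig_apply, mul_sub, mul_add, mul_ite, mul_zero,
    Finset.sum_sub_distrib, Finset.sum_add_distrib, Finset.sum_ite_eq', Finset.mem_univ,
    if_true, h2i, h2j]
  split_ifs with h h' h'
  · exact absurd (h.symm.trans h') hij
  all_goals ring

theorem rel_sq (C : B → B → ℝ) (i : B) (h2i : C i i = 2) :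
    sig C i * sig C i = 1 := by
  apply LinearMap.ext
  intro v
  funext k
  simp only [Module.End.mul_apply, sig_apply, Module.End.one_apply, mul_sub, mul_ite, mul_zero,
    Finset.sum_sub_distrib, Finset.sum_ite_eq', Finset.mem_univ, if_true, h2i]
  split_ifs with h
  · ring
  · ring

theorem rel_pow (C : B → B → ℝ) {i j : B} (hij : i ≠ j) (h2i : C i i = 2) (h2j : C j j = 2)
    (hsym : C i j = C j i) {m : ℕ}
    (hm : m = 2 ∧ C i j ^ 2 = 0 ∨ m = 3 ∧ C i j ^ 2 = 1 ∨ m = 4 ∧ C i j ^ 2 = 2 ∨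
      m = 6 ∧ C i j ^ 2 = 3) :
    (sig C i * sig C j) ^ m = 1 := by
  apply LinearMap.ext
  intro v
  have hstart : (fun k => v k + (if k = i then (0:ℝ) else 0) + (if k = j then (0:ℝ) else 0))
      = v := by funext k; simp
  rw [Module.End.one_apply, ← hstart]
  have ts := two_step C hij h2i h2j
  rcases hm with ⟨rfl, hs⟩ | ⟨rfl, hs⟩ | ⟨rfl, hs⟩ | ⟨rfl, hs⟩
  · have hs0 : C i j = 0 := (pow_eq_zero_iff (by norm_num : (2:ℕ) ≠ 0)).mp hs
    rw [show (sig C i * sig C j) ^ 2 = (sig C i * sig C j) * (sig C i * sig C j) from by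
      noncomm_ring]
    rw [Module.End.mul_apply, ts, ts, ← hsym]
    funext k
    split_ifs with h h'
    · exact absurd (h.symm.trans h') hij
    all_goals simp [hs0]; try ring
  · rw [show (sig C i * sig C j) ^ 3
        = (sig C i * sig C j) * (sig C i * sig C j) * (sig C i * sig C j) from by noncomm_ring]
    rw [Module.End.mul_apply, ts, Module.End.mul_apply, ts, ts, ← hsym]
    funext k
    split_ifs with h h'
    · exact absurd (h.symm.trans h') hij
    · linear_combination ((∑ x, C i x * v x) - 2 * C i j * (∑ x, C j x * v x)
        - C i j ^ 2 * (∑ x, C i x * v x) + C i j ^ 3 * (∑ x, C j x * v x)) * hs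
    · linear_combination ((∑ x, C j x * v x) + C i j * (∑ x, C i x * v x)
        - C i j ^ 2 * (∑ x, C j x * v x)) * hs
    · ring
  · rw [show (sig C i * sig C j) ^ 4 = (sig C i * sig C j) * (sig C i * sig C j) *
        (sig C i * sig C j) * (sig C i * sig C j) from by noncomm_ring]
    rw [Module.End.mul_apply, ts, Module.End.mul_apply, ts, Module.End.mul_apply, ts, ts, ← hsym]
    funext k
    split_ifs with h h'
    · exact absurd (h.symm.trans h') hij
    · linear_combination ((1) * C i j * (∑ x, C j x * v x) + (2) * C i j ^ 2 * (∑ x, C i x * v x) + (-3) * C i j ^ 3 * (∑ x, C j x * v x) + (-1) * C i j ^ 4 * (∑ x, C i x * v x) + (1) * C i j ^ 5 * (∑ x, C j x * v x)) * hs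
    · linear_combination ((-1) * C i j * (∑ x, C i x * v x) + (2) * C i j ^ 2 * (∑ x, C j x * v x) + (1) * C i j ^ 3 * (∑ x, C i x * v x) + (-1) * C i j ^ 4 * (∑ x, C j x * v x)) * hs
    · ring
  · rw [show (sig C i * sig C j) ^ 6 = (sig C i * sig C j) * (sig C i * sig C j) *
        (sig C i * sig C j) * (sig C i * sig C j) * (sig C i * sig C j) * (sig C i * sig C j)
        from by noncomm_ring]
    rw [Module.End.mul_apply, ts, Module.End.mul_apply, ts, Module.End.mul_apply, ts,
      Module.End.mul_apply, ts, Module.End.mul_apply, ts, ts, ← hsym]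
    funext k
    split_ifs with h h'
    · exact absurd (h.symm.trans h') hij
    · linear_combination ((1) * C i j * (∑ x, C j x * v x) + (3) * C i j ^ 2 * (∑ x, C i x * v x) + (-7) * C i j ^ 3 * (∑ x, C j x * v x) + (-7) * C i j ^ 4 * (∑ x, C i x * v x) + (11) * C i j ^ 5 * (∑ x, C j x * v x) + (5) * C i j ^ 6 * (∑ x, C i x * v x) + (-6) * C i j ^ 7 * (∑ x, C j x * v x) + (-1) * C i j ^ 8 * (∑ x, C i x * v x) + (1) * C i j ^ 9 * (∑ x, C j x * v x)) * hs
    · linear_combination ((-1) * C i j * (∑ x, C i x * v x) + (3) * C i j ^ 2 * (∑ x, C j x * v x) + (4) * C i j ^ 3 * (∑ x, C i x * v x) + (-7) * C i j ^ 4 * (∑ x, C j x * v x) + (-4) * C i j ^ 5 * (∑ x, C i x * v x) + (5) * C i j ^ 6 * (∑ x, C j x * v x) + (1) * C i j ^ 7 * (∑ x, C i x * v x) + (-1) * C i j ^ 8 * (∑ x, C j x * v x)) * hs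
    · ring

/-- The numeric value `4 cos² (π / m)` for crystallographic values of `m`. -/
noncomputable def qq (n : ℕ) : ℝ :=
  if n = 3 then 1 else if n = 4 then 2 else if n = 6 then 3 else 0

theorem qq_nonneg (n : ℕ) : 0 ≤ qq n := by
  unfold qq; split_ifs <;> norm_num

/-- A symmetric "Cartan-like" matrix attached to a Coxeter matrix. -/
noncomputable def Cmat (M : CoxeterMatrix B) : B → B → ℝ :=
  fun i j => if i = j then 2 else -Real.sqrt (qq (M i j))

theorem Cmat_diag (M : CoxeterMatrix B) (i : B) : Cmat M i i = 2 := if_pos rfl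

theorem Cmat_nonpos (M : CoxeterMatrix B) {i j : B} (h : i ≠ j) : Cmat M i j ≤ 0 := by
  rw [Cmat, if_neg h]
  simp [Real.sqrt_nonneg]

theorem Cmat_symm (M : CoxeterMatrix B) (i j : B) : Cmat M i j = Cmat M j i := by
  unfold Cmat
  by_cases h : i = j
  · subst h; rfl
  · rw [if_neg h, if_neg (Ne.symm h), M.symmetric i j]

theorem Cmat_sq (M : CoxeterMatrix B) {i j : B} (h : i ≠ j) :
    Cmat M i j ^ 2 = qq (M i j) := by
  rw [Cmat, if_neg h, neg_pow, Real.sq_sqrt (qq_nonneg _)]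
  ring

theorem cmat_liftable (M : CoxeterMatrix B)
    (hcrys : ∀ i j : B, i ≠ j → M i j ∈ ({2, 3, 4, 6} : Set ℕ)) :
    M.IsLiftable (fun i => sig (Cmat M) i) := by
  intro i j
  by_cases hij : i = j
  · subst hij
    rw [M.diagonal i, pow_one]
    exact rel_sq (Cmat M) i (Cmat_diag M i)
  · apply rel_pow (Cmat M) hij (Cmat_diag M i) (Cmat_diag M j) (Cmat_symm M i j)
    have hmem := hcrys i j hij
    simp only [Set.mem_insert_iff, Set.mem_singleton_iff] at hmem
    have hsq := Cmat_sq M hij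
    rcases hmem with h2 | h3 | h4 | h6
    · exact Or.inl ⟨h2, by rw [hsq, h2]; norm_num [qq]⟩
    · exact Or.inr (Or.inl ⟨h3, by rw [hsq, h3]; norm_num [qq]⟩)
    · exact Or.inr (Or.inr (Or.inl ⟨h4, by rw [hsq, h4]; norm_num [qq]⟩))
    · exact Or.inr (Or.inr (Or.inr ⟨h6, by rw [hsq, h6]; norm_num [qq]⟩))

end Stmt8Aux

/-- Let `W` be the Weyl group of a reduced irreducible root system of rank at least 2,
presented as a crystallographic Coxeter system with connected Coxeter diagram.  If `w`
is a Coxeter element (a product of all simple reflections, each occurring once), then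
no simple reflection commutes with `w`: the set of commuting descents of `w` is empty. -/
theorem stmt_8 {B W : Type*} [Group W] [Finite B] {M : CoxeterMatrix B}
    (cs : CoxeterSystem M W)
    (hcrys : ∀ i j : B, i ≠ j → M i j ∈ ({2, 3, 4, 6} : Set ℕ))
    (hirr : (SimpleGraph.fromRel (fun i j : B => M i j ≠ 2)).Connected)
    (hrank : 1 < Nat.card B)
    (w : W) (ω : List B)
    (hnd : ω.Nodup) (hall : ∀ i : B, i ∈ ω) (hw : w = cs.wordProd ω) :
    ∀ i : B, cs.simple i * w ≠ w * cs.simple i := by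
  classical
  letI : Fintype B := Fintype.ofFinite B
  intro i h
  open Stmt8Aux in
  set C : B → B → ℝ := Stmt8Aux.Cmat M with hC
  have hlift : M.IsLiftable (fun k => Stmt8Aux.sig C k) := Stmt8Aux.cmat_liftable M hcrys
  set ρ : W →* Module.End ℝ (B → ℝ) := cs.lift ⟨fun k => Stmt8Aux.sig C k, hlift⟩ with hρ
  have hρs : ∀ k : B, ρ (cs.simple k) = Stmt8Aux.sig C k := fun k =>
    cs.lift_apply_simple hlift k
  have hρw : ∀ l : List B, ρ (cs.wordProd l) = (l.map (Stmt8Aux.sig C)).prod := by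
    intro l
    induction l with
    | nil => simp [CoxeterSystem.wordProd_nil]
    | cons j t ih => rw [CoxeterSystem.wordProd_cons, map_mul, hρs, List.map_cons,
        List.prod_cons, ih]
  -- the commuting hypothesis at the level of the representation
  have hc : Stmt8Aux.sig C i * ρ w = ρ w * Stmt8Aux.sig C i := by
    have := congrArg ρ h
    rwa [map_mul, map_mul, hρs] at this
  have hsingle : Stmt8Aux.sig C i (Pi.single i 1) = -Pi.single i 1 := by
    funext k
    rw [Stmt8Aux.sig_apply]
    simp only [Pi.single_apply, mul_ite, mul_one, mul_zero, Finset.sum_ite_eq',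
      Finset.mem_univ, if_true, Stmt8Aux.Cmat_diag, Pi.neg_apply, hC]
    split_ifs <;> norm_num
  have hvec : Stmt8Aux.sig C i (ρ w (Pi.single i 1)) = -(ρ w (Pi.single i 1)) := by
    rw [← Module.End.mul_apply, hc, Module.End.mul_apply, hsingle, map_neg]
  have huk : ∀ k, k ≠ i → ρ w (Pi.single i 1) k = 0 := by
    intro k hk
    have := congrFun hvec k
    rw [Stmt8Aux.sig_apply_ne C hk] at this
    have : ρ w (Pi.single i 1) k = -(ρ w (Pi.single i 1) k) := this
    linarith
  -- split the word at the occurrence of i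
  obtain ⟨a, b, rfl⟩ := List.append_of_mem (hall i)
  rw [List.nodup_append] at hnd
  obtain ⟨hand, hibnd, hdisj⟩ := hnd
  have hib : i ∉ b := (List.nodup_cons.mp hibnd).1
  have hbnd : b.Nodup := (List.nodup_cons.mp hibnd).2
  have hia : i ∉ a := fun hmem => hdisj i hmem i (List.mem_cons_self (a := i) (l := b)) rfl
  have hba : ∀ x ∈ b, x ∉ a := fun x hx hxa => hdisj x hxa x (List.mem_cons_of_mem i hx) rfl
  -- the vector computations
  have hwprod : ρ w = (a.map (Stmt8Aux.sig C)).prod *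
      (Stmt8Aux.sig C i * (b.map (Stmt8Aux.sig C)).prod) := by
    rw [hw, hρw, List.map_append, List.prod_append, List.map_cons, List.prod_cons]
  set ub : B → ℝ := (b.map (Stmt8Aux.sig C)).prod (Pi.single i 1) with hub
  have hCnonpos : ∀ x y : B, x ≠ y → C x y ≤ 0 := fun x y hxy => Stmt8Aux.Cmat_nonpos M hxy
  obtain ⟨hb1, hb2, hb3, hb4⟩ := Stmt8Aux.lemB C hCnonpos i b hbnd hib
  have hueq : ρ w (Pi.single i 1)
      = (a.map (Stmt8Aux.sig C)).prod (Stmt8Aux.sig C i ub) := by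
    rw [hwprod, Module.End.mul_apply, Module.End.mul_apply]
  have hb0 : ∀ jb ∈ b, ub jb = 0 := by
    intro jb hjb
    have hjbi : jb ≠ i := fun hh => hib (hh ▸ hjb)
    have hjba : jb ∉ a := hba jb hjb
    have h0 : ρ w (Pi.single i 1) jb = 0 := huk jb hjbi
    rw [hueq, Stmt8Aux.prods_apply_ne C a hjba, Stmt8Aux.sig_apply_ne C hjbi] at h0
    exact h0
  have hCb : ∀ jb ∈ b, C jb i = 0 := fun jb hjb => hb4 jb hjb (hb0 jb hjb)
  have hubeq : ub = Pi.single i 1 := by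
    funext k
    rw [hub]
    by_cases hk : k = i
    · rw [hk, hb1, Pi.single_eq_same]
    · rw [Pi.single_apply, if_neg hk]
      by_cases hkb : k ∈ b
      · have := hb0 k hkb; rwa [hub] at this
      · exact hb3 k hk hkb
  have hufinal : ρ w (Pi.single i 1)
      = -((a.map (Stmt8Aux.sig C)).prod (Pi.single i 1)) := by
    rw [hueq, hubeq, hsingle, map_neg]
  obtain ⟨_, _, _, ha4⟩ := Stmt8Aux.lemB C hCnonpos i a hand hia
  have hCa : ∀ ja ∈ a, C ja i = 0 := by
    intro ja hja
    have hjai : ja ≠ i := fun hh => hia (hh ▸ hja)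
    have h0 : ρ w (Pi.single i 1) ja = 0 := huk ja hjai
    rw [hufinal, Pi.neg_apply, neg_eq_zero] at h0
    exact ha4 ja hja h0
  -- every vertex different from i has C _ i = 0
  have hCall : ∀ j : B, j ≠ i → C j i = 0 := by
    intro j hj
    rcases List.mem_append.mp (hall j) with hja | hjib
    · exact hCa j hja
    · rcases List.mem_cons.mp hjib with rfl | hjb
      · exact absurd rfl hj
      · exact hCb j hjb
  -- but irreducibility gives a neighbor of i
  have hnb : ∃ j : B, i ≠ j ∧ M i j ≠ 2 := by
    haveI : Nontrivial B := Finite.one_lt_card_iff_nontrivial.mp hrank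
    obtain ⟨j, hj⟩ := exists_ne i
    obtain ⟨p⟩ := hirr.preconnected i j
    cases p with
    | nil => exact absurd rfl hj.symm
    | cons hadj _ =>
      rename_i c _
      rw [SimpleGraph.fromRel_adj] at hadj
      obtain ⟨hic, hm⟩ := hadj
      refine ⟨c, hic, ?_⟩
      rcases hm with hm | hm
      · exact hm
      · rwa [M.symmetric i c]
  obtain ⟨j, hij, hm2⟩ := hnb
  have hC0 : C j i = 0 := hCall j (Ne.symm hij)
  -- derive a contradiction: C j i is strictly negative
  have hqpos : 0 < Stmt8Aux.qq (M j i) := by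
    rw [M.symmetric j i]
    have hmem := hcrys i j hij
    simp only [Set.mem_insert_iff, Set.mem_singleton_iff] at hmem
    rcases hmem with h2 | h3 | h4 | h6
    · exact absurd h2 hm2
    · rw [h3]; norm_num [Stmt8Aux.qq]
    · rw [h4]; norm_num [Stmt8Aux.qq]
    · rw [h6]; norm_num [Stmt8Aux.qq]
  have : C j i < 0 := by
    rw [hC, Stmt8Aux.Cmat, if_neg (Ne.symm hij)]
    simpa using Real.sqrt_pos.mpr hqpos
  rw [hC0] at this
  exact lt_irrefl 0 this
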